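/- Let A ∈ B(E,F) have generalized inverse A⁺ and suppose A is Fredholm with dim N(A) = m and codim R(A) = n. Let W = { T : ‖T − A‖ < ‖A⁺‖⁻¹ } and D(X) = (X − A) P_{R(A⁺)} + C_A(A⁺,X)⁻¹ X. Then for X ∈ W: X is Fredholm with dim N(X) = m and codim R(X) = n if and only if D(X)(N(A)) ⊆ R(A), i.e., D maps Φ_{m,n} ∩ W into M₀ = { T ∈ B(E,F) : T(N(A)) ⊆ R(A) } and conversely. -/

import Mathlib

open ContinuousLinearMap

variable {E F : Type*} [NormedAddCommGroup E] [NormedSpace ℝ E] [CompleteSpace E]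
  [NormedAddCommGroup F] [NormedSpace ℝ F] [CompleteSpace F]

/-- The map D(X) = (X - A) P_{R(A⁺)} + C_A(A⁺,X)⁻¹ X. -/
noncomputable def mapD (A : E →L[ℝ] F) (Ap : F →L[ℝ] E) (Pr : E →L[ℝ] E)
    (X : E →L[ℝ] F) : E →L[ℝ] F :=
  (X - A) ∘L Pr + Ring.inverse (ContinuousLinearMap.id ℝ F + (X - A) ∘L Ap) ∘L X

set_option maxHeartbeats 2000000 in
theorem stmt19 (A : E →L[ℝ] F) (Ap : F →L[ℝ] E)
    (h1 : A ∘L (Ap ∘L A) = A) (h2 : Ap ∘L (A ∘L Ap) = Ap)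
    (m n : ℕ)
    (hkerA : FiniteDimensional ℝ (LinearMap.ker (A : E →ₗ[ℝ] F)))
    (hm : Module.finrank ℝ (LinearMap.ker (A : E →ₗ[ℝ] F)) = m)
    (hcokerA : FiniteDimensional ℝ (F ⧸ LinearMap.range (A : E →ₗ[ℝ] F)))
    (hn : Module.finrank ℝ (F ⧸ LinearMap.range (A : E →ₗ[ℝ] F)) = n)
    (Pr : E →L[ℝ] E) (hPr : Pr ∘L Pr = Pr)
    (hPrr : LinearMap.range (Pr : E →ₗ[ℝ] E) = LinearMap.range (Ap : F →ₗ[ℝ] E))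
    (hPrk : LinearMap.ker (Pr : E →ₗ[ℝ] E) = LinearMap.ker (A : E →ₗ[ℝ] F)) :
    ∀ X : E →L[ℝ] F, ‖X - A‖ < ‖Ap‖⁻¹ →
      ((FiniteDimensional ℝ (LinearMap.ker (X : E →ₗ[ℝ] F)) ∧
        Module.finrank ℝ (LinearMap.ker (X : E →ₗ[ℝ] F)) = m ∧
        IsClosed (LinearMap.range (X : E →ₗ[ℝ] F) : Set F) ∧
        FiniteDimensional ℝ (F ⧸ LinearMap.range (X : E →ₗ[ℝ] F)) ∧
        Module.finrank ℝ (F ⧸ LinearMap.range (X : E →ₗ[ℝ] F)) = n) ↔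
      Submodule.map (mapD A Ap Pr X : E →ₗ[ℝ] F) (LinearMap.ker (A : E →ₗ[ℝ] F)) ≤ LinearMap.range (A : E →ₗ[ℝ] F)) := by
  haveI := hkerA
  haveI := hcokerA
  intro X hX
  -- pointwise versions of the generalized-inverse identities
  have hA1 : ∀ x, A (Ap (A x)) = A x := fun x => by
    have := ContinuousLinearMap.ext_iff.mp h1 x; simpa using this
  have hA2 : ∀ y, Ap (A (Ap y)) = Ap y := fun y => by
    have := ContinuousLinearMap.ext_iff.mp h2 y; simpa using this
  -- the operator T = (X - A) ∘ Ap has norm < 1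
  have hTnorm : ‖(X - A) ∘L Ap‖ < 1 := by
    rcases eq_or_lt_of_le (norm_nonneg Ap) with h0 | h0
    · calc ‖(X - A) ∘L Ap‖ ≤ ‖X - A‖ * ‖Ap‖ := opNorm_comp_le _ _
        _ = 0 := by rw [← h0, mul_zero]
        _ < 1 := one_pos
    · calc ‖(X - A) ∘L Ap‖ ≤ ‖X - A‖ * ‖Ap‖ := opNorm_comp_le _ _
        _ < ‖Ap‖⁻¹ * ‖Ap‖ := by exact mul_lt_mul_of_pos_right hX h0
        _ = 1 := inv_mul_cancel₀ (ne_of_gt h0)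
  -- the invertible operator C = id + (X - A) ∘ Ap
  set u : (F →L[ℝ] F)ˣ := Units.oneSub (-((X - A) ∘L Ap)) (by rwa [norm_neg]) with hu
  have hCu : ContinuousLinearMap.id ℝ F + (X - A) ∘L Ap = (u : F →L[ℝ] F) := by
    simp only [hu, Units.oneSub, ContinuousLinearMap.one_def, sub_neg_eq_add]
  have hRinv : Ring.inverse (ContinuousLinearMap.id ℝ F + (X - A) ∘L Ap)
      = ((u⁻¹ : (F →L[ℝ] F)ˣ) : F →L[ℝ] F) := by
    rw [hCu, Ring.inverse_unit]
  set Y : E →L[ℝ] F := ((u⁻¹ : (F →L[ℝ] F)ˣ) : F →L[ℝ] F) ∘L X with hY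
  have huinvu : ∀ y : F, ((u⁻¹ : (F →L[ℝ] F)ˣ) : F →L[ℝ] F) ((u : F →L[ℝ] F) y) = y := by
    intro y
    have : ((u⁻¹ : (F →L[ℝ] F)ˣ) : F →L[ℝ] F) * (u : F →L[ℝ] F) = 1 := u.inv_mul
    calc ((u⁻¹ : (F →L[ℝ] F)ˣ) : F →L[ℝ] F) ((u : F →L[ℝ] F) y)
        = (((u⁻¹ : (F →L[ℝ] F)ˣ) : F →L[ℝ] F) * (u : F →L[ℝ] F)) y := rfl
      _ = y := by rw [this]; rfl
  have huuinv : ∀ y : F, (u : F →L[ℝ] F) (((u⁻¹ : (F →L[ℝ] F)ˣ) : F →L[ℝ] F) y) = y := by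
    intro y
    have : (u : F →L[ℝ] F) * ((u⁻¹ : (F →L[ℝ] F)ˣ) : F →L[ℝ] F) = 1 := u.mul_inv
    calc (u : F →L[ℝ] F) (((u⁻¹ : (F →L[ℝ] F)ˣ) : F →L[ℝ] F) y)
        = ((u : F →L[ℝ] F) * ((u⁻¹ : (F →L[ℝ] F)ˣ) : F →L[ℝ] F)) y := rfl
      _ = y := by rw [this]; rfl
  -- key identity : u (A x) = X (Ap (A x))
  have huA : ∀ x, (u : F →L[ℝ] F) (A x) = X (Ap (A x)) := by
    intro x
    have : (u : F →L[ℝ] F) (A x)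
        = (ContinuousLinearMap.id ℝ F + (X - A) ∘L Ap) (A x) := by rw [hCu]
    rw [this]
    simp [ContinuousLinearMap.add_apply, ContinuousLinearMap.comp_apply,
      ContinuousLinearMap.sub_apply, hA1 x]
  -- hence Y (Ap (A x)) = A x
  have hYQ : ∀ x, Y (Ap (A x)) = A x := by
    intro x
    rw [hY]
    simp only [ContinuousLinearMap.comp_apply]
    rw [← huA x, huinvu]
  have hYAp : ∀ y, Y (Ap y) = A (Ap y) := by
    intro y
    calc Y (Ap y) = Y (Ap (A (Ap y))) := by rw [hA2]
      _ = A (Ap y) := hYQ (Ap y)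
  have hXY : ∀ x, X x = (u : F →L[ℝ] F) (Y x) := by
    intro x; rw [hY]; simp only [ContinuousLinearMap.comp_apply]; rw [huuinv]
  -- on ker A, mapD agrees with Y
  have hDv : ∀ v, v ∈ LinearMap.ker (A : E →ₗ[ℝ] F) → mapD A Ap Pr X v = Y v := by
    intro v hv
    have hPrv : Pr v = 0 := by
      have : v ∈ LinearMap.ker (Pr : E →ₗ[ℝ] E) := by rw [hPrk]; exact hv
      exact this
    simp only [mapD, ContinuousLinearMap.add_apply, ContinuousLinearMap.comp_apply,
      hPrv, map_zero, zero_add, hRinv, hY]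
  -- the condition is equivalent to : Y maps ker A into range A
  have hcond : (Submodule.map (mapD A Ap Pr X : E →ₗ[ℝ] F) (LinearMap.ker (A : E →ₗ[ℝ] F)) ≤ LinearMap.range (A : E →ₗ[ℝ] F))
      ↔ ∀ v ∈ LinearMap.ker (A : E →ₗ[ℝ] F), Y v ∈ LinearMap.range (A : E →ₗ[ℝ] F) := by
    constructor
    · intro h v hv
      have : Y v ∈ Submodule.map (mapD A Ap Pr X : E →ₗ[ℝ] F) (LinearMap.ker (A : E →ₗ[ℝ] F)) := by
        refine ⟨v, hv, ?_⟩
        exact hDv v hv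
      exact h this
    · rintro h _ ⟨v, hv, rfl⟩
      rw [ContinuousLinearMap.coe_coe, hDv v hv]
      exact h v hv
  -- kernels of X and Y coincide
  have hkerXY : LinearMap.ker (X : E →ₗ[ℝ] F) = LinearMap.ker (Y : E →ₗ[ℝ] F) := by
    ext v
    simp only [LinearMap.mem_ker, ContinuousLinearMap.coe_coe]
    constructor
    · intro h
      have : Y v = ((u⁻¹ : (F →L[ℝ] F)ˣ) : F →L[ℝ] F) (X v) := rfl
      rw [this, h, map_zero]
    · intro h
      rw [hXY v, h, map_zero]
  -- the finite-rank obstruction map f : ker A → F ⧸ range A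
  set f : (LinearMap.ker (A : E →ₗ[ℝ] F)) →ₗ[ℝ] F ⧸ LinearMap.range (A : E →ₗ[ℝ] F) :=
    (LinearMap.range (A : E →ₗ[ℝ] F)).mkQ ∘ₗ ((Y : E →ₗ[ℝ] F) ∘ₗ (LinearMap.ker (A : E →ₗ[ℝ] F)).subtype) with hf
  have hf_apply : ∀ v : LinearMap.ker (A : E →ₗ[ℝ] F), f v = Submodule.Quotient.mk (Y v) := fun v => rfl
  have hmemker : ∀ v : LinearMap.ker (A : E →ₗ[ℝ] F),
      (v ∈ LinearMap.ker f ↔ Y (v : E) ∈ LinearMap.range (A : E →ₗ[ℝ] F)) := by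
    intro v
    rw [LinearMap.mem_ker, hf_apply, Submodule.Quotient.mk_eq_zero]
  -- the map g : ker f → ker Y,  v ↦ v - Ap (Y v), is a linear equivalence
  have hg_mem : ∀ v : LinearMap.ker f, ((v : LinearMap.ker (A : E →ₗ[ℝ] F)) : E) - Ap (Y ((v : LinearMap.ker (A : E →ₗ[ℝ] F)) : E)) ∈ LinearMap.ker (Y : E →ₗ[ℝ] F) := by
    rintro ⟨⟨v, hv⟩, hfv⟩
    have hv' : A v = 0 := hv
    have hYv : Y v ∈ LinearMap.range (A : E →ₗ[ℝ] F) := (hmemker ⟨v, hv⟩).mp hfv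
    obtain ⟨z, hz⟩ := hYv
    have : Y (v - Ap (Y v)) = Y v - Y (Ap (Y v)) := by rw [map_sub]
    rw [LinearMap.mem_ker]
    show Y (v - Ap (Y v)) = 0
    rw [this, hYAp, ← hz, ContinuousLinearMap.coe_coe, hA1, sub_self]
  set g : (LinearMap.ker f) →ₗ[ℝ] (LinearMap.ker (Y : E →ₗ[ℝ] F)) :=
    { toFun := fun v => ⟨((v : LinearMap.ker (A : E →ₗ[ℝ] F)) : E) - Ap (Y ((v : LinearMap.ker (A : E →ₗ[ℝ] F)) : E)), hg_mem v⟩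
      map_add' := by
        rintro ⟨⟨v, hv⟩, hfv⟩ ⟨⟨w, hw⟩, hfw⟩
        ext
        simp only [Submodule.coe_add, map_add]
        abel
      map_smul' := by
        rintro c ⟨⟨v, hv⟩, hfv⟩
        ext
        simp [smul_sub] } with hg
  have hg_apply : ∀ v : LinearMap.ker f,
      ((g v : LinearMap.ker (Y : E →ₗ[ℝ] F)) : E) = ((v : LinearMap.ker (A : E →ₗ[ℝ] F)) : E) - Ap (Y ((v : LinearMap.ker (A : E →ₗ[ℝ] F)) : E)) :=
    fun v => rfl
  have hg_inj : Function.Injective g := by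
    rw [← LinearMap.ker_eq_bot]
    rw [LinearMap.ker_eq_bot']
    rintro ⟨⟨v, hv⟩, hfv⟩ hgv
    have h0 : v - Ap (Y v) = 0 := by
      have := congrArg (Subtype.val) hgv
      simpa [hg] using this
    have hveq : v = Ap (Y v) := by
      have := sub_eq_zero.mp h0; exact this
    have hAv : A v = 0 := hv
    have : Ap (A v) = v := by
      conv_lhs => rw [hveq]
      rw [hA2, ← hveq]
    rw [hAv, map_zero] at this
    ext
    simp [← this]
  have hg_surj : Function.Surjective g := by
    rintro ⟨y, hy⟩
    have hYy : Y y = 0 := hy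
    have hvA : A (y - Ap (A y)) = 0 := by rw [map_sub, hA1, sub_self]
    have hYv : Y (y - Ap (A y)) = - A y := by
      rw [map_sub, hYQ, hYy, zero_sub]
    have hvf : (⟨y - Ap (A y), hvA⟩ : LinearMap.ker (A : E →ₗ[ℝ] F)) ∈ LinearMap.ker f := by
      rw [hmemker]
      show Y (y - Ap (A y)) ∈ LinearMap.range (A : E →ₗ[ℝ] F)
      rw [hYv]
      exact ⟨-y, by rw [map_neg]; rfl⟩
    refine ⟨⟨⟨y - Ap (A y), hvA⟩, hvf⟩, ?_⟩
    ext
    rw [hg_apply]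
    show y - Ap (A y) - Ap (Y (y - Ap (A y))) = y
    rw [hYv, map_neg, sub_neg_eq_add, sub_add_cancel]
  let e1 : (LinearMap.ker f) ≃ₗ[ℝ] (LinearMap.ker (Y : E →ₗ[ℝ] F)) :=
    LinearEquiv.ofBijective g ⟨hg_inj, hg_surj⟩
  -- range A is closed
  have hclA : IsClosed (LinearMap.range (A : E →ₗ[ℝ] F) : Set F) := by
    have : LinearMap.range (A : E →ₗ[ℝ] F) = LinearMap.ker ((ContinuousLinearMap.id ℝ F - A ∘L Ap : F →L[ℝ] F) : F →ₗ[ℝ] F) := by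
      ext y
      constructor
      · rintro ⟨x, rfl⟩
        rw [LinearMap.mem_ker]
        simp only [ContinuousLinearMap.coe_coe, ContinuousLinearMap.sub_apply,
          ContinuousLinearMap.comp_apply, ContinuousLinearMap.id_apply]
        rw [hA1, sub_self]
      · intro hy
        have : y - A (Ap y) = 0 := hy
        exact ⟨Ap y, (sub_eq_zero.mp this).symm⟩
    rw [this]
    exact ContinuousLinearMap.isClosed_ker _
  constructor
  · -- Fredholm data ⇒ condition
    rintro ⟨hfdX, hmX, -, -, -⟩
    rw [hcond]
    haveI : FiniteDimensional ℝ (LinearMap.ker (Y : E →ₗ[ℝ] F)) := hkerXY ▸ hfdX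
    haveI : FiniteDimensional ℝ (LinearMap.ker f) :=
      Submodule.finiteDimensional_of_le le_top
    have h1' : Module.finrank ℝ (LinearMap.ker f) = m := by
      rw [e1.finrank_eq, ← hkerXY, hmX]
    have h2' : Module.finrank ℝ (LinearMap.range f) + Module.finrank ℝ (LinearMap.ker f)
        = Module.finrank ℝ (LinearMap.ker (A : E →ₗ[ℝ] F)) := LinearMap.finrank_range_add_finrank_ker f
    have hr0 : Module.finrank ℝ (LinearMap.range f) = 0 := by omega
    have hrbot : LinearMap.range f = ⊥ := Submodule.finrank_eq_zero.mp hr0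
    intro v hv
    have : f ⟨v, hv⟩ ∈ LinearMap.range f := ⟨⟨v, hv⟩, rfl⟩
    rw [hrbot, Submodule.mem_bot] at this
    exact (hmemker ⟨v, hv⟩).mp this
  · -- condition ⇒ Fredholm data
    intro hc
    have hYk : ∀ v ∈ LinearMap.ker (A : E →ₗ[ℝ] F), Y v ∈ LinearMap.range (A : E →ₗ[ℝ] F) := hcond.mp hc
    -- range Y = range A
    have hrY : LinearMap.range (Y : E →ₗ[ℝ] F) = LinearMap.range (A : E →ₗ[ℝ] F) := by
      apply le_antisymm
      · rintro _ ⟨x, rfl⟩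
        have hdecomp : Y x = A x + Y (x - Ap (A x)) := by
          rw [map_sub, hYQ]; abel
        have hker : x - Ap (A x) ∈ LinearMap.ker (A : E →ₗ[ℝ] F) := by
          rw [LinearMap.mem_ker]
          show A (x - Ap (A x)) = 0
          rw [map_sub, hA1, sub_self]
        show Y x ∈ LinearMap.range (A : E →ₗ[ℝ] F)
        rw [hdecomp]
        exact Submodule.add_mem _ ⟨x, rfl⟩ (hYk _ hker)
      · rintro _ ⟨x, rfl⟩
        exact ⟨Ap (A x), hYQ x⟩
    -- ker f = ⊤
    have hkerf : LinearMap.ker f = ⊤ := by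
      rw [eq_top_iff]
      rintro ⟨v, hv⟩ -
      rw [hmemker]
      exact hYk v hv
    haveI : FiniteDimensional ℝ (LinearMap.ker f) :=
      Submodule.finiteDimensional_of_le le_top
    have hkerfm : Module.finrank ℝ (LinearMap.ker f) = m := by
      rw [hkerf, finrank_top, hm]
    haveI hfdY : FiniteDimensional ℝ (LinearMap.ker (Y : E →ₗ[ℝ] F)) := Module.Finite.equiv e1
    have hmY : Module.finrank ℝ (LinearMap.ker (Y : E →ₗ[ℝ] F)) = m := by
      rw [← e1.finrank_eq, hkerfm]
    haveI hfdX : FiniteDimensional ℝ (LinearMap.ker (X : E →ₗ[ℝ] F)) := by rw [hkerXY]; exact hfdY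
    refine ⟨hfdX, by rw [hkerXY, hmY], ?_, ?_, ?_⟩
    · -- closedness of range X
      have hset : (LinearMap.range (X : E →ₗ[ℝ] F) : Set F)
          = (u : F →L[ℝ] F) '' (LinearMap.range (A : E →ₗ[ℝ] F) : Set F) := by
        rw [← hrY]
        ext y
        constructor
        · rintro ⟨x, rfl⟩
          exact ⟨Y x, ⟨x, rfl⟩, (hXY x).symm⟩
        · rintro ⟨_, ⟨x, rfl⟩, rfl⟩
          exact ⟨x, hXY x⟩
      rw [hset]
      have he2 : ⇑(ContinuousLinearEquiv.unitsEquiv ℝ F u) = ⇑(u : F →L[ℝ] F) :=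
        funext fun y => ContinuousLinearEquiv.unitsEquiv_apply ℝ F u y
      rw [← he2]
      exact ((ContinuousLinearEquiv.unitsEquiv ℝ F u).toHomeomorph.isClosed_image).mpr hclA
    all_goals {
      have he3 : ∀ y, ((ContinuousLinearEquiv.unitsEquiv ℝ F u).toLinearEquiv : F →ₗ[ℝ] F) y
          = (u : F →L[ℝ] F) y := fun y => rfl
      have hmap : (LinearMap.range (A : E →ₗ[ℝ] F)).map
          ((ContinuousLinearEquiv.unitsEquiv ℝ F u).toLinearEquiv : F →ₗ[ℝ] F)
          = LinearMap.range (X : E →ₗ[ℝ] F) := by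
        rw [← hrY]
        ext y
        constructor
        · rintro ⟨_, ⟨x, rfl⟩, rfl⟩
          exact ⟨x, by rw [he3]; exact hXY x⟩
        · rintro ⟨x, rfl⟩
          exact ⟨Y x, ⟨x, rfl⟩, by rw [he3]; exact (hXY x).symm⟩
      have q : (F ⧸ LinearMap.range (A : E →ₗ[ℝ] F)) ≃ₗ[ℝ] (F ⧸ LinearMap.range (X : E →ₗ[ℝ] F)) :=
        Submodule.Quotient.equiv (LinearMap.range (A : E →ₗ[ℝ] F)) (LinearMap.range (X : E →ₗ[ℝ] F))
          (ContinuousLinearEquiv.unitsEquiv ℝ F u).toLinearEquiv hmap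
      first
      | exact Module.Finite.equiv q
      | rw [← q.finrank_eq, hn]
    }
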